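/- Let Ω_A ⊆ V and Ω_B ⊆ W be nonempty compact convex sets in finite-dimensional real vector spaces, and suppose there exist linear functionals u_A : V → ℝ and u_B : W → ℝ with u_A(a) = 1 for all a ∈ Ω_A and u_B(b) = 1 for all b ∈ Ω_B. Then for every x ∈ Ω_A and y ∈ Ω_B, the refinement set of x ⊗ y within the minimal tensor product Ω_A ⊠ Ω_B equals convexHull{a ⊗ b | a ∈ Ref(x), b ∈ Ref(y)}, where Ref(x) and Ref(y) are the refinement sets of x in Ω_A and of y in Ω_B respectively. -/

import Mathlib

open TensorProduct

/-- `s` refines `x` (written `s ≻ x`) relative to the convex set `Ω`: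
there exist `p ∈ (0,1]` and `t ∈ Ω` with `x = p • s + (1-p) • t`. -/
def Refines {V : Type*} [AddCommGroup V] [Module ℝ V] (Ω : Set V) (s x : V) : Prop :=
  ∃ p : ℝ, 0 < p ∧ p ≤ 1 ∧ ∃ t ∈ Ω, x = p • s + (1 - p) • t

/-- The refinement set of `x` in `Ω`: all states of `Ω` refining `x`. -/
def RefSet {V : Type*} [AddCommGroup V] [Module ℝ V] (Ω : Set V) (x : V) : Set V :=
  {s ∈ Ω | Refines Ω s x}

/-- The minimal tensor product of two state spaces. -/
def MinTensor {V W : Type*} [AddCommGroup V] [Module ℝ V] [AddCommGroup W] [Module ℝ W]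
    (S : Set V) (T : Set W) : Set (TensorProduct ℝ V W) :=
  convexHull ℝ {z | ∃ a ∈ S, ∃ b ∈ T, z = a ⊗ₜ[ℝ] b}

lemma refines_trans {V : Type*} [AddCommGroup V] [Module ℝ V] {Ω : Set V} (hΩ : Convex ℝ Ω)
    {r s x : V} (h₁ : Refines Ω r s) (h₂ : Refines Ω s x) : Refines Ω r x := by
  obtain ⟨q, hq0, hq1, u, hu, hs⟩ := h₁
  obtain ⟨p, hp0, hp1, t, ht, hx⟩ := h₂
  rcases lt_or_eq_of_le (show p * q ≤ 1 by nlinarith) with hpq | hpq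
  · have h1pq : (0:ℝ) < 1 - p * q := by linarith
    have hc : (1 : ℝ) - p * q ≠ 0 := ne_of_gt h1pq
    have hinv : (0:ℝ) ≤ (1 - p*q)⁻¹ := inv_nonneg.mpr h1pq.le
    have ha0 : 0 ≤ (1 - p*q)⁻¹ * (p * (1 - q)) :=
      mul_nonneg hinv (mul_nonneg hp0.le (by linarith))
    have hb0 : 0 ≤ (1 - p*q)⁻¹ * (1 - p) := mul_nonneg hinv (by linarith)
    have habs : (1 - p*q)⁻¹ * (p * (1 - q)) + (1 - p*q)⁻¹ * (1 - p) = 1 := by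
      field_simp
      ring
    have hv : ((1 - p*q)⁻¹ * (p * (1 - q))) • u + ((1 - p*q)⁻¹ * (1 - p)) • t ∈ Ω :=
      hΩ hu ht ha0 hb0 habs
    refine ⟨p * q, mul_pos hp0 hq0, le_of_lt hpq, _, hv, ?_⟩
    subst hx hs
    match_scalars
    · ring
    · field_simp
    · field_simp
  · have hp' : p = 1 := by nlinarith
    have hq' : q = 1 := by nlinarith
    subst hp' hq'
    refine ⟨1, one_pos, le_refl 1, t, ht, ?_⟩
    subst hx hs
    match_scalars <;> ring

lemma refines_of_sum {V : Type*} [AddCommGroup V] [Module ℝ V] {Ω : Set V} (hΩ : Convex ℝ Ω)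
    {ι : Type*} {t : Finset ι} {w : ι → ℝ} {e : ι → V}
    (hw0 : ∀ i ∈ t, 0 ≤ w i) (hw1 : ∑ i ∈ t, w i = 1)
    (he : ∀ i ∈ t, e i ∈ Ω) {x : V} (hxe : ∑ i ∈ t, w i • e i = x)
    {i : ι} (hi : i ∈ t) (hwi : 0 < w i) : Refines Ω (e i) x := by
  classical
  have hle : w i ≤ 1 := hw1 ▸ Finset.single_le_sum hw0 hi
  have hsplit : w i • e i + ∑ j ∈ t.erase i, w j • e j = x :=
    (Finset.add_sum_erase t (fun j => w j • e j) hi).trans hxe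
  rcases lt_or_eq_of_le hle with h1 | h1
  · have hc : (0:ℝ) < 1 - w i := by linarith
    have hsum' : ∑ j ∈ t.erase i, w j = 1 - w i := by
      have := Finset.add_sum_erase t w hi
      linarith [hw1 ▸ this]
    set y : V := ∑ j ∈ t.erase i, ((1 - w i)⁻¹ * w j) • e j with hy
    have hyΩ : y ∈ Ω := by
      apply hΩ.sum_mem
      · intro j hj
        exact mul_nonneg (by positivity) (hw0 j (Finset.mem_of_mem_erase hj))
      · rw [← Finset.mul_sum, hsum', inv_mul_cancel₀ (ne_of_gt hc)]
      · intro j hj; exact he j (Finset.mem_of_mem_erase hj)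
    refine ⟨w i, hwi, hle, y, hyΩ, ?_⟩
    have : (1 - w i) • y = ∑ j ∈ t.erase i, w j • e j := by
      rw [hy, Finset.smul_sum]
      apply Finset.sum_congr rfl
      intro j hj
      rw [smul_smul, mul_inv_cancel_left₀ (ne_of_gt hc)]
    rw [this, hsplit]
  · -- w i = 1, so all other weights are zero and x = e i
    have hsum0 : ∑ j ∈ t.erase i, w j = 0 := by
      have := Finset.add_sum_erase t w hi
      rw [hw1] at this
      linarith [this]
    have hz : ∀ j ∈ t.erase i, w j = 0 := by
      intro j hj
      have := (Finset.sum_eq_zero_iff_of_nonneg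
        (fun j hj => hw0 j (Finset.mem_of_mem_erase hj))).mp hsum0
      exact this j hj
    have hxei : e i = x := by
      rw [← hsplit, h1, one_smul,
        Finset.sum_eq_zero (fun j hj => by rw [hz j hj, zero_smul]), add_zero]
    refine ⟨1, one_pos, le_refl 1, e i, he i hi, ?_⟩
    rw [hxei]
    match_scalars <;> ring

lemma convex_refSet {V : Type*} [AddCommGroup V] [Module ℝ V] {Ω : Set V} (hΩ : Convex ℝ Ω)
    (x : V) : Convex ℝ (RefSet Ω x) := by
  rintro s₁ ⟨h₁Ω, p₁, hp₁0, hp₁1, t₁, ht₁, hx₁⟩ s₂ ⟨h₂Ω, p₂, hp₂0, hp₂1, t₂, ht₂, hx₂⟩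
    lam mu hlam hmu hlm
  refine ⟨hΩ h₁Ω h₂Ω hlam hmu hlm, ?_⟩
  rcases eq_or_lt_of_le hlam with h | hl
  · have hmu1 : mu = 1 := by linarith
    subst hmu1
    rw [← h, zero_smul, zero_add, one_smul]
    exact ⟨p₂, hp₂0, hp₂1, t₂, ht₂, hx₂⟩
  rcases eq_or_lt_of_le hmu with h' | hm
  · have hlam1 : lam = 1 := by linarith
    subst hlam1
    rw [← h', zero_smul, add_zero, one_smul]
    exact ⟨p₁, hp₁0, hp₁1, t₁, ht₁, hx₁⟩
  obtain ⟨D, hD⟩ : ∃ D : ℝ, D = p₁ * mu + p₂ * lam := ⟨_, rfl⟩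
  have hDpos : 0 < D := by rw [hD]; positivity
  obtain ⟨θ, hθ⟩ : ∃ θ : ℝ, θ = p₂ * lam / D := ⟨_, rfl⟩
  obtain ⟨r, hr⟩ : ∃ r : ℝ, r = p₁ * p₂ / D := ⟨_, rfl⟩
  have hr0 : 0 < r := by rw [hr]; positivity
  have hr1 : r ≤ 1 := by
    rw [hr, div_le_one hDpos, hD]
    nlinarith [mul_nonneg (mul_nonneg hp₂0.le hlam) (sub_nonneg.mpr hp₁1),
      mul_nonneg (mul_nonneg hp₁0.le hmu) (sub_nonneg.mpr hp₂1)]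
  have hθ0 : 0 ≤ θ := by rw [hθ]; positivity
  have hθ1 : θ ≤ 1 := by
    rw [hθ, div_le_one hDpos, hD]
    nlinarith [mul_nonneg hp₁0.le hmu]
  obtain ⟨c₁, hc₁⟩ : ∃ c : ℝ, c = θ * (1 - p₁) := ⟨_, rfl⟩
  obtain ⟨c₂, hc₂⟩ : ∃ c : ℝ, c = (1 - θ) * (1 - p₂) := ⟨_, rfl⟩
  have hc₁0 : 0 ≤ c₁ := hc₁ ▸ mul_nonneg hθ0 (by linarith)
  have hc₂0 : 0 ≤ c₂ := hc₂ ▸ mul_nonneg (by linarith) (by linarith)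
  have hDne : D ≠ 0 := ne_of_gt hDpos
  have hθD : θ * D = p₂ * lam := by rw [hθ]; field_simp
  have hrD : r * D = p₁ * p₂ := by rw [hr]; field_simp
  have hA : θ * p₁ + (1 - θ) * p₂ = r := by
    have h1 : (θ * p₁ + (1 - θ) * p₂) * D = r * D := by
      rw [hrD]
      have : (θ * p₁ + (1 - θ) * p₂) * D = θ * D * p₁ + p₂ * D - θ * D * p₂ := by ring
      rw [this, hθD, hD]
      linear_combination (p₁ * p₂) * hlm
    exact mul_right_cancel₀ hDne h1
  have hcsum : c₁ + c₂ = 1 - r := by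
    rw [hc₁, hc₂]
    linear_combination -hA
  have hkey : x = r • (lam • s₁ + mu • s₂) + (c₁ • t₁ + c₂ • t₂) := by
    have e1 : x = θ • x + (1 - θ) • x := by match_scalars; ring
    rw [e1]
    nth_rewrite 1 [hx₁]
    nth_rewrite 1 [hx₂]
    have hs1 : θ * p₁ = r * lam := by
      have : (θ * p₁) * D = (r * lam) * D := by
        have e : (θ * p₁) * D = θ * D * p₁ := by ring
        have e' : (r * lam) * D = r * D * lam := by ring
        rw [e, e', hθD, hrD]; ring
      exact mul_right_cancel₀ hDne this
    have hs2 : (1 - θ) * p₂ = r * mu := by linear_combination hA - hs1 - r * hlm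
    rw [hc₁, hc₂]
    match_scalars
    all_goals first | ring1 | linear_combination hs1 | linear_combination hs2 |
      linear_combination -hs2 | linear_combination -hs1
  rcases lt_or_eq_of_le hr1 with hrlt | hre
  · have h1r : (0:ℝ) < 1 - r := by linarith
    have h1r' : (1:ℝ) - r ≠ 0 := ne_of_gt h1r
    have hyΩ : ((1 - r)⁻¹ * c₁) • t₁ + ((1 - r)⁻¹ * c₂) • t₂ ∈ Ω := by
      apply hΩ ht₁ ht₂ (mul_nonneg (inv_nonneg.mpr h1r.le) hc₁0)
        (mul_nonneg (inv_nonneg.mpr h1r.le) hc₂0)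
      rw [← mul_add, hcsum, inv_mul_cancel₀ h1r']
    refine ⟨r, hr0, hr1, _, hyΩ, ?_⟩
    have hcollapse : (1 - r) • (((1 - r)⁻¹ * c₁) • t₁ + ((1 - r)⁻¹ * c₂) • t₂)
        = c₁ • t₁ + c₂ • t₂ := by
      rw [smul_add, smul_smul, smul_smul, mul_inv_cancel_left₀ h1r', mul_inv_cancel_left₀ h1r']
    rw [hcollapse]
    exact hkey
  · have hc10 : c₁ = 0 := by linarith
    have hc20 : c₂ = 0 := by linarith
    have hxΩ : x ∈ Ω := by
      rw [hx₁]
      exact hΩ h₁Ω ht₁ hp₁0.le (by linarith) (by ring)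
    refine ⟨1, one_pos, le_refl 1, x, hxΩ, ?_⟩
    rw [← hre]
    have : x = r • (lam • s₁ + mu • s₂) := by
      rw [hkey, hc10, hc20]; simp
    rw [← this]
    rw [hre]
    simp

lemma tensor_key {V W : Type*} [AddCommGroup V] [Module ℝ V] [AddCommGroup W] [Module ℝ W]
    {ΩA : Set V} {ΩB : Set W} (hAconv : Convex ℝ ΩA) (hBconv : Convex ℝ ΩB)
    (uA : V →ₗ[ℝ] ℝ) (huA : ∀ a ∈ ΩA, uA a = 1)
    (uB : W →ₗ[ℝ] ℝ) (huB : ∀ b ∈ ΩB, uB b = 1)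
    {x : V} (hx : x ∈ ΩA) {y : W} (hy : y ∈ ΩB)
    {ι : Type*} {t : Finset ι} {w : ι → ℝ} {f : ι → TensorProduct ℝ V W}
    (hw0 : ∀ i ∈ t, 0 ≤ w i) (hw1 : ∑ i ∈ t, w i = 1)
    (hf : ∀ i ∈ t, ∃ a ∈ ΩA, ∃ b ∈ ΩB, f i = a ⊗ₜ[ℝ] b)
    (hsum : ∑ i ∈ t, w i • f i = x ⊗ₜ[ℝ] y)
    {i : ι} (hi : i ∈ t) (hwi : 0 < w i) :
    ∃ a ∈ RefSet ΩA x, ∃ b ∈ RefSet ΩB y, f i = a ⊗ₜ[ℝ] b := by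
  classical
  set L : TensorProduct ℝ V W →ₗ[ℝ] V :=
    (TensorProduct.rid ℝ V).toLinearMap ∘ₗ LinearMap.lTensor V uB with hLdef
  set R : TensorProduct ℝ V W →ₗ[ℝ] W :=
    (TensorProduct.lid ℝ W).toLinearMap ∘ₗ LinearMap.rTensor W uA with hRdef
  have hL : ∀ (a : V) (b : W), L (a ⊗ₜ[ℝ] b) = uB b • a := by
    intro a b
    simp [hLdef, LinearMap.lTensor_tmul, TensorProduct.rid_tmul]
  have hR : ∀ (a : V) (b : W), R (a ⊗ₜ[ℝ] b) = uA a • b := by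
    intro a b
    simp [hRdef, LinearMap.rTensor_tmul, TensorProduct.lid_tmul]
  have hLmem : ∀ j ∈ t, L (f j) ∈ ΩA := by
    intro j hj
    obtain ⟨a, ha, b, hb, hfj⟩ := hf j hj
    rw [hfj, hL, huB b hb, one_smul]
    exact ha
  have hRmem : ∀ j ∈ t, R (f j) ∈ ΩB := by
    intro j hj
    obtain ⟨a, ha, b, hb, hfj⟩ := hf j hj
    rw [hfj, hR, huA a ha, one_smul]
    exact hb
  have hLx : ∑ j ∈ t, w j • L (f j) = x := by
    have h1 : L (∑ j ∈ t, w j • f j) = ∑ j ∈ t, w j • L (f j) := by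
      rw [map_sum]
      exact Finset.sum_congr rfl fun j _ => L.map_smul (w j) (f j)
    rw [← h1, hsum, hL, huB y hy, one_smul]
  have hRy : ∑ j ∈ t, w j • R (f j) = y := by
    have h1 : R (∑ j ∈ t, w j • f j) = ∑ j ∈ t, w j • R (f j) := by
      rw [map_sum]
      exact Finset.sum_congr rfl fun j _ => R.map_smul (w j) (f j)
    rw [← h1, hsum, hR, huA x hx, one_smul]
  have hrefA : Refines ΩA (L (f i)) x := refines_of_sum hAconv hw0 hw1 hLmem hLx hi hwi
  have hrefB : Refines ΩB (R (f i)) y := refines_of_sum hBconv hw0 hw1 hRmem hRy hi hwi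
  refine ⟨L (f i), ⟨hLmem i hi, hrefA⟩, R (f i), ⟨hRmem i hi, hrefB⟩, ?_⟩
  obtain ⟨a, ha, b, hb, hfi⟩ := hf i hi
  rw [hfi, hL, hR, huB b hb, huA a ha, one_smul, one_smul]

/-- for normalised state spaces `Ω_A`, `Ω_B` (admitting unit
functionals), the refinement set of a product state `x ⊗ y` in the minimal
tensor product `Ω_A ⊠ Ω_B` is the convex hull of products of refinements. -/
theorem refSet_of_product_state {V W : Type*}
    [NormedAddCommGroup V] [NormedSpace ℝ V] [FiniteDimensional ℝ V]
    [NormedAddCommGroup W] [NormedSpace ℝ W] [FiniteDimensional ℝ W]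
    (ΩA : Set V) (ΩB : Set W)
    (hAne : ΩA.Nonempty) (hAcomp : IsCompact ΩA) (hAconv : Convex ℝ ΩA)
    (hBne : ΩB.Nonempty) (hBcomp : IsCompact ΩB) (hBconv : Convex ℝ ΩB)
    (uA : V →ₗ[ℝ] ℝ) (huA : ∀ a ∈ ΩA, uA a = 1)
    (uB : W →ₗ[ℝ] ℝ) (huB : ∀ b ∈ ΩB, uB b = 1)
    (x : V) (hx : x ∈ ΩA) (y : W) (hy : y ∈ ΩB) :
    RefSet (MinTensor ΩA ΩB) (x ⊗ₜ[ℝ] y) =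
      convexHull ℝ {z | ∃ a ∈ RefSet ΩA x, ∃ b ∈ RefSet ΩB y, z = a ⊗ₜ[ℝ] b} := by
  classical
  apply Set.Subset.antisymm
  · rintro z ⟨hzmem, href⟩
    obtain ⟨p, hp0, hp1, u, humem, hxy⟩ := href
    have hz' := hzmem
    simp only [MinTensor] at hz' humem
    rw [convexHull_eq] at hz' humem
    obtain ⟨ι₁, t₁, w₁, f₁, h₁0, h₁1, h₁mem, h₁eq⟩ := hz'
    obtain ⟨ι₂, t₂, w₂, f₂, h₂0, h₂1, h₂mem, h₂eq⟩ := humem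
    rw [Finset.centerMass_eq_of_sum_1 _ _ h₁1] at h₁eq
    rw [Finset.centerMass_eq_of_sum_1 _ _ h₂1] at h₂eq
    have hw0 : ∀ i ∈ t₁.disjSum t₂,
        0 ≤ Sum.elim (fun i => p * w₁ i) (fun j => (1 - p) * w₂ j) i := by
      rintro (i | j) hij
      · exact mul_nonneg hp0.le (h₁0 i (Finset.inl_mem_disjSum.mp hij))
      · exact mul_nonneg (by linarith) (h₂0 j (Finset.inr_mem_disjSum.mp hij))
    have hw1 : ∑ i ∈ t₁.disjSum t₂,
        Sum.elim (fun i => p * w₁ i) (fun j => (1 - p) * w₂ j) i = 1 := by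
      rw [Finset.sum_sumElim, ← Finset.mul_sum, ← Finset.mul_sum, h₁1, h₂1]
      ring
    have hfmem : ∀ i ∈ t₁.disjSum t₂,
        ∃ a ∈ ΩA, ∃ b ∈ ΩB, Sum.elim f₁ f₂ i = a ⊗ₜ[ℝ] b := by
      rintro (i | j) hij
      · exact h₁mem i (Finset.inl_mem_disjSum.mp hij)
      · exact h₂mem j (Finset.inr_mem_disjSum.mp hij)
    have hsum : ∑ i ∈ t₁.disjSum t₂,
        Sum.elim (fun i => p * w₁ i) (fun j => (1 - p) * w₂ j) i • Sum.elim f₁ f₂ i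
          = x ⊗ₜ[ℝ] y := by
      rw [Finset.sum_disjSum]
      simp only [Sum.elim_inl, Sum.elim_inr]
      have e₁ : ∑ i ∈ t₁, (p * w₁ i) • f₁ i = p • z := by
        rw [← h₁eq, Finset.smul_sum]
        exact Finset.sum_congr rfl fun i _ => mul_smul p (w₁ i) (f₁ i)
      have e₂ : ∑ j ∈ t₂, ((1 - p) * w₂ j) • f₂ j = (1 - p) • u := by
        rw [← h₂eq, Finset.smul_sum]
        exact Finset.sum_congr rfl fun j _ => mul_smul (1 - p) (w₂ j) (f₂ j)
      rw [e₁, e₂, ← hxy]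
    have hsub : t₁.filter (fun i => w₁ i ≠ 0) ⊆ t₁ := Finset.filter_subset _ _
    have hzsum : z = ∑ i ∈ t₁.filter (fun i => w₁ i ≠ 0), w₁ i • f₁ i := by
      rw [← h₁eq]
      symm
      apply Finset.sum_subset hsub
      intro i hi hni
      simp only [Finset.mem_filter, not_and, not_not] at hni
      rw [hni hi, zero_smul]
    rw [hzsum]
    apply (convex_convexHull ℝ _).sum_mem
    · intro i hi
      exact h₁0 i (hsub hi)
    · rw [Finset.sum_filter_ne_zero]
      exact h₁1
    · intro i hi
      have hi₁ := hsub hi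
      have hwi : 0 < w₁ i :=
        lt_of_le_of_ne (h₁0 i hi₁) (Ne.symm (Finset.mem_filter.mp hi).2)
      have hkey := tensor_key hAconv hBconv uA huA uB huB hx hy hw0 hw1 hfmem hsum
        (Finset.inl_mem_disjSum.mpr hi₁)
        (show (0:ℝ) < p * w₁ i from mul_pos hp0 hwi)
      exact subset_convexHull ℝ _ hkey
  · apply convexHull_min
    · rintro _ ⟨a, ⟨haΩ, hax⟩, b, ⟨hbΩ, hby⟩, rfl⟩
      obtain ⟨p, hp0, hp1, tA, htA, hxa⟩ := hax
      obtain ⟨q, hq0, hq1, tB, htB, hyb⟩ := hby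
      have hconv : Convex ℝ (MinTensor ΩA ΩB) := convex_convexHull ℝ _
      have hmemab : a ⊗ₜ[ℝ] b ∈ MinTensor ΩA ΩB :=
        subset_convexHull ℝ _ ⟨a, haΩ, b, hbΩ, rfl⟩
      refine ⟨hmemab, ?_⟩
      have step1 : Refines (MinTensor ΩA ΩB) (a ⊗ₜ[ℝ] y) (x ⊗ₜ[ℝ] y) := by
        refine ⟨p, hp0, hp1, tA ⊗ₜ[ℝ] y,
          subset_convexHull ℝ _ ⟨tA, htA, y, hy, rfl⟩, ?_⟩
        rw [hxa, TensorProduct.add_tmul, TensorProduct.smul_tmul', TensorProduct.smul_tmul']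
      have step2 : Refines (MinTensor ΩA ΩB) (a ⊗ₜ[ℝ] b) (a ⊗ₜ[ℝ] y) := by
        refine ⟨q, hq0, hq1, a ⊗ₜ[ℝ] tB,
          subset_convexHull ℝ _ ⟨a, haΩ, tB, htB, rfl⟩, ?_⟩
        rw [hyb, TensorProduct.tmul_add, TensorProduct.tmul_smul, TensorProduct.tmul_smul]
      exact refines_trans hconv step2 step1
    · exact convex_refSet (convex_convexHull ℝ _) _
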